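/- Let A ⊆ (0,∞) be a Lebesgue-measurable set of positive measure all of whose points are density points (a nonempty density-open set), and let j be a positive rational. Then the set U_j(A) = ⋃_{q ∈ ℚ, q ≥ j} q·A contains almost all points (with respect to Lebesgue measure) of some infinite half-line (c,∞); in particular U_j(A) meets every essentially unbounded measurable set. -/

import Mathlib

set_option maxHeartbeats 1000000

open MeasureTheory Filter Set Topology ENNReal

private lemma img_eq (q : ℝ) (hq : q ≠ 0) (s : Set ℝ) :
    (fun x => q * x) '' s = (fun x => q⁻¹ * x) ⁻¹' s := by
  ext y
  simp only [Set.mem_image, Set.mem_preimage]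
  constructor
  · rintro ⟨x, hx, rfl⟩; simpa [inv_mul_cancel_left₀ hq] using hx
  · intro h; exact ⟨q⁻¹ * y, h, by field_simp⟩

private lemma vol_img (q : ℝ) (hq : 0 < q) (s : Set ℝ) :
    volume ((fun x => q * x) '' s) = ENNReal.ofReal q * volume s := by
  rw [img_eq q hq.ne' s, Real.volume_preimage_mul_left (inv_ne_zero hq.ne'), inv_inv,
    abs_of_pos hq]

private lemma tendsto_bound {f : ℝ → ℝ≥0∞} (h : Tendsto f (𝓝[>] 0) (𝓝 1)) :
    ∃ η > (0:ℝ), ∀ r, 0 < r → r < η → (3/4 : ℝ≥0∞) < f r := by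
  have h34 : (3/4 : ℝ≥0∞) < 1 := by rw [ENNReal.div_lt_iff (by norm_num) (by norm_num)]; norm_num
  have := h.eventually (lt_mem_nhds h34)
  rw [eventually_nhdsWithin_iff] at this
  obtain ⟨η, hη, H⟩ := Metric.eventually_nhds_iff.1 this
  exact ⟨η, hη, fun r h0 hr => H (by simpa [Real.dist_eq, abs_of_pos h0] using hr) h0⟩

/-- `x` is a Lebesgue density point of `T`. -/
def IsDensityPoint (T : Set ℝ) (x : ℝ) : Prop :=
  Tendsto (fun δ : ℝ => volume (T ∩ Ioo (x - δ / 2) (x + δ / 2)) / ENNReal.ofReal δ)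
    (𝓝[>] 0) (𝓝 1)

private lemma measU (A : Set ℝ) (hA : MeasurableSet A) (j : ℚ) (hj : 0 < j) :
    MeasurableSet (⋃ (q : ℚ) (_ : j ≤ q), (fun x => (q : ℝ) * x) '' A) := by
  refine MeasurableSet.iUnion fun q => MeasurableSet.iUnion fun hq => ?_
  have hq0 : (0:ℝ) < (q:ℝ) := by exact_mod_cast hj.trans_le hq
  rw [img_eq _ hq0.ne']
  exact hA.preimage (measurable_const_mul _)

private lemma key (A : Set ℝ) (hA₀ : A ⊆ Ioi 0) (hA : MeasurableSet A)
    (j : ℚ) (hj : 0 < j) (a : ℝ) (haA : a ∈ A) (hda : IsDensityPoint A a) :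
    volume (Ioi ((j:ℝ) * a) \ ⋃ (q : ℚ) (_ : j ≤ q), (fun x => (q : ℝ) * x) '' A) = 0 := by
  set U := ⋃ (q : ℚ) (_ : j ≤ q), (fun x => (q : ℝ) * x) '' A with hUdef
  have hU : MeasurableSet U := measU A hA j hj
  have ha0 : 0 < a := hA₀ haA
  have hj0 : (0:ℝ) < (j:ℝ) := by exact_mod_cast hj
  by_contra hne
  set T := Ioi ((j:ℝ) * a) \ U with hTdef
  have hT : MeasurableSet T := measurableSet_Ioi.diff hU
  have hres : volume.restrict T ≠ 0 := by
    simpa [Measure.restrict_eq_zero] using hne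
  have : (ae (volume.restrict T)).NeBot := ae_neBot.2 hres
  obtain ⟨x, hxTend, hxT⟩ :=
    ((Besicovitch.ae_tendsto_measure_inter_div volume T).and (ae_restrict_mem hT)).exists
  obtain ⟨hx1, hx2⟩ := hxT
  rw [mem_Ioi] at hx1
  have hx0 : 0 < x := (mul_pos hj0 ha0).trans hx1
  -- density at a: get δ₀
  obtain ⟨δ₀, hδ₀, hDen⟩ := tendsto_bound hda
  -- density of T at x: get η
  obtain ⟨η, hη0, hEta⟩ := tendsto_bound hxTend
  -- choose δ
  set δ : ℝ := min δ₀ (min (2*a) (min (4*(x - (j:ℝ)*a)/(j:ℝ)) (η*a/(2*x)))) / 2 with hδdef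
  have hb3 : 0 < 4*(x - (j:ℝ)*a)/(j:ℝ) := by
    apply div_pos _ hj0; linarith
  have hb4 : 0 < η*a/(2*x) := by positivity
  have hδpos : 0 < δ := by positivity
  have hδ1 : δ < δ₀ := by
    have := min_le_left δ₀ (min (2*a) (min (4*(x - (j:ℝ)*a)/(j:ℝ)) (η*a/(2*x))))
    rw [hδdef]; linarith
  have hδ2 : δ < 2*a := by
    have h1 := min_le_right δ₀ (min (2*a) (min (4*(x - (j:ℝ)*a)/(j:ℝ)) (η*a/(2*x))))
    have h2 := min_le_left (2*a) (min (4*(x - (j:ℝ)*a)/(j:ℝ)) (η*a/(2*x)))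
    rw [hδdef]; linarith
  have hδ3 : δ < 4*(x - (j:ℝ)*a)/(j:ℝ) := by
    have h1 := min_le_right δ₀ (min (2*a) (min (4*(x - (j:ℝ)*a)/(j:ℝ)) (η*a/(2*x))))
    have h2 := min_le_right (2*a) (min (4*(x - (j:ℝ)*a)/(j:ℝ)) (η*a/(2*x)))
    have h3 := min_le_left (4*(x - (j:ℝ)*a)/(j:ℝ)) (η*a/(2*x))
    rw [hδdef]; linarith
  have hδ4 : δ < η*a/(2*x) := by
    have h1 := min_le_right δ₀ (min (2*a) (min (4*(x - (j:ℝ)*a)/(j:ℝ)) (η*a/(2*x))))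
    have h2 := min_le_right (2*a) (min (4*(x - (j:ℝ)*a)/(j:ℝ)) (η*a/(2*x)))
    have h3 := min_le_right (4*(x - (j:ℝ)*a)/(j:ℝ)) (η*a/(2*x))
    rw [hδdef]; linarith
  clear_value δ
  -- a - δ/4 positive
  have hlo : 0 < a - δ/4 := by linarith
  have hhi : 0 < a + δ/4 := by linarith
  -- choose rational q
  have hlt : x/(a + δ/4) < x/(a - δ/4) := by
    apply div_lt_div_of_pos_left hx0 hlo; linarith
  obtain ⟨q, hq1, hq2⟩ := exists_rat_btwn hlt
  have hjq : (j:ℝ) < x/(a + δ/4) := by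
    rw [lt_div_iff₀ hhi]
    have h := (lt_div_iff₀ hj0).1 hδ3
    nlinarith
  have hjqq : j ≤ q := by
    have : (j:ℝ) < (q:ℝ) := hjq.trans hq1
    exact_mod_cast this.le
  have hq0 : (0:ℝ) < (q:ℝ) := hj0.trans (hjq.trans hq1)
  have hqa1 : x < (q:ℝ)*(a + δ/4) := (div_lt_iff₀ hhi).1 hq1
  have hqa2 : (q:ℝ)*(a - δ/4) < x := (lt_div_iff₀ hlo).1 hq2
  have hqub : (q:ℝ)*a < 2*x := by nlinarith
  set r : ℝ := 3/4 * (q:ℝ) * δ with hrdef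
  have hr0 : 0 < r := by rw [hrdef]; positivity
  clear_value r
  have hrη : r < η := by
    have hδ4' : δ * (2*x) < η*a := (lt_div_iff₀ (by positivity)).1 hδ4
    have h5 : (q:ℝ)*δ*a < η*a := by nlinarith
    have h6 : (q:ℝ)*δ < η := lt_of_mul_lt_mul_right h5 ha0.le
    nlinarith [mul_pos hq0 hδpos]
  -- key inclusion
  have hincl : (fun y => (q:ℝ) * y) '' (A ∩ Ioo (a - δ/2) (a + δ/2))
      ⊆ U ∩ Metric.closedBall x r := by
    rintro _ ⟨y, ⟨hyA, hy1, hy2⟩, rfl⟩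
    constructor
    · exact Set.mem_iUnion.2 ⟨q, Set.mem_iUnion.2 ⟨hjqq, Set.mem_image_of_mem _ hyA⟩⟩
    · rw [Metric.mem_closedBall, Real.dist_eq, abs_le]
      have h7 : (q:ℝ)*a - (q:ℝ)*δ/2 < (q:ℝ)*y := by
        calc (q:ℝ)*a - (q:ℝ)*δ/2 = (q:ℝ)*(a - δ/2) := by ring
          _ < (q:ℝ)*y := (mul_lt_mul_iff_right₀ hq0).2 hy1
      have h8 : (q:ℝ)*y < (q:ℝ)*a + (q:ℝ)*δ/2 := by
        calc (q:ℝ)*y < (q:ℝ)*(a + δ/2) := (mul_lt_mul_iff_right₀ hq0).2 hy2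
          _ = (q:ℝ)*a + (q:ℝ)*δ/2 := by ring
      have hqa1' : x < (q:ℝ)*a + (q:ℝ)*δ/4 := by
        calc x < (q:ℝ)*(a + δ/4) := hqa1
          _ = (q:ℝ)*a + (q:ℝ)*δ/4 := by ring
      have hqa2' : (q:ℝ)*a - (q:ℝ)*δ/4 < x := by
        calc (q:ℝ)*a - (q:ℝ)*δ/4 = (q:ℝ)*(a - δ/4) := by ring
          _ < x := hqa2
      constructor
      · show -r ≤ (q:ℝ)*y - x
        linarith [h7, hqa1', hrdef]
      · show (q:ℝ)*y - x ≤ r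
        linarith [h8, hqa2', hrdef]
  -- volume lower bound on U ∩ ball
  have hvol : ENNReal.ofReal r ≤ volume (U ∩ Metric.closedBall x r) := by
    have h1 := hDen δ hδpos hδ1
    have hd0 : ENNReal.ofReal δ ≠ 0 := by simp [hδpos]
    have hdt : ENNReal.ofReal δ ≠ ⊤ := ENNReal.ofReal_ne_top
    rw [ENNReal.lt_div_iff_mul_lt (Or.inl hd0) (Or.inl hdt)] at h1
    have h2 : ENNReal.ofReal r ≤ ENNReal.ofReal (q:ℝ) * (3/4 * ENNReal.ofReal δ) := by
      rw [show (3/4 : ℝ≥0∞) = ENNReal.ofReal (3/4 : ℝ) by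
        rw [ENNReal.ofReal_div_of_pos (by norm_num)]; norm_num]
      rw [← ENNReal.ofReal_mul (by norm_num), ← ENNReal.ofReal_mul (by positivity)]
      apply ENNReal.ofReal_le_ofReal
      rw [hrdef]; ring_nf
      exact le_rfl
    have h3 : ENNReal.ofReal (q:ℝ) * (3/4 * ENNReal.ofReal δ)
        ≤ ENNReal.ofReal (q:ℝ) * volume (A ∩ Ioo (a - δ/2) (a + δ/2)) :=
      mul_le_mul_right h1.le _
    have h4 : ENNReal.ofReal (q:ℝ) * volume (A ∩ Ioo (a - δ/2) (a + δ/2))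
        = volume ((fun y => (q:ℝ) * y) '' (A ∩ Ioo (a - δ/2) (a + δ/2))) :=
      (vol_img _ hq0 _).symm
    exact h2.trans (h3.trans (h4.le.trans (measure_mono hincl)))
  -- upper bound on T ∩ ball
  have hcb : volume (Metric.closedBall x r) = ENNReal.ofReal (2*r) := by
    rw [Real.volume_closedBall]
  have hTU : T ∩ U = ∅ := by
    rw [hTdef]; ext z; simp only [Set.mem_inter_iff, Set.mem_diff, Set.mem_empty_iff_false]
    tauto
  have hsub : T ∩ Metric.closedBall x r ⊆ Metric.closedBall x r \ (U ∩ Metric.closedBall x r) := by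
    rintro z ⟨hz1, hz2⟩
    refine ⟨hz2, fun hz3 => ?_⟩
    have : z ∈ T ∩ U := ⟨hz1, hz3.1⟩
    rw [hTU] at this; exact this
  have hvolT : volume (T ∩ Metric.closedBall x r) ≤ ENNReal.ofReal r := by
    calc volume (T ∩ Metric.closedBall x r)
        ≤ volume (Metric.closedBall x r \ (U ∩ Metric.closedBall x r)) := measure_mono hsub
      _ = volume (Metric.closedBall x r) - volume (U ∩ Metric.closedBall x r) := by
          apply measure_diff inter_subset_right
            (hU.inter measurableSet_closedBall).nullMeasurableSet
          rw [← lt_top_iff_ne_top]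
          exact (measure_mono inter_subset_right).trans_lt
            (by rw [hcb]; exact ENNReal.ofReal_lt_top)
      _ ≤ ENNReal.ofReal (2*r) - ENNReal.ofReal r := by
          rw [hcb]; exact tsub_le_tsub le_rfl hvol
      _ = ENNReal.ofReal r := by
          rw [← ENNReal.ofReal_sub _ hr0.le]; ring_nf
  -- contradiction
  have hEr := hEta r hr0 hrη
  have hhalf : volume (T ∩ Metric.closedBall x r) / volume (Metric.closedBall x r)
      ≤ ENNReal.ofReal (1/2 : ℝ) := by
    calc volume (T ∩ Metric.closedBall x r) / volume (Metric.closedBall x r)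
        ≤ ENNReal.ofReal r / ENNReal.ofReal (2*r) := by
          rw [hcb]; exact ENNReal.div_le_div_right hvolT _
      _ = ENNReal.ofReal (r / (2*r)) := (ENNReal.ofReal_div_of_pos (by positivity)).symm
      _ = ENNReal.ofReal (1/2 : ℝ) := by
          congr 1
          field_simp [hr0.ne']
  have hcontra : ENNReal.ofReal (1/2 : ℝ) < (3/4 : ℝ≥0∞) := by
    rw [show (3/4 : ℝ≥0∞) = ENNReal.ofReal (3/4 : ℝ) by
      rw [ENNReal.ofReal_div_of_pos (by norm_num)]; norm_num]
    rw [ENNReal.ofReal_lt_ofReal_iff (by norm_num)]; norm_num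
  exact absurd (hEr.trans_le hhalf) (not_lt.2 hcontra.le)

theorem stmt_5 (A : Set ℝ) (hA₀ : A ⊆ Ioi 0) (hA : MeasurableSet A)
    (hpos : 0 < volume A) (hd : ∀ x ∈ A, IsDensityPoint A x)
    (j : ℚ) (hj : 0 < j) :
    (∃ c : ℝ, volume (Ioi c \ ⋃ (q : ℚ) (_ : j ≤ q), (fun x => (q : ℝ) * x) '' A) = 0) ∧
    ∀ S : Set ℝ, S ⊆ Ioi 0 → MeasurableSet S →
      (∀ m : ℕ, 0 < volume (S ∩ Ioi (m : ℝ))) →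
      (S ∩ ⋃ (q : ℚ) (_ : j ≤ q), (fun x => (q : ℝ) * x) '' A).Nonempty := by
  obtain ⟨a, haA⟩ := nonempty_of_measure_ne_zero hpos.ne'
  have hkey := key A hA₀ hA j hj a haA (hd a haA)
  refine ⟨⟨(j:ℝ)*a, hkey⟩, ?_⟩
  intro S hS₀ hS hSm
  by_contra hcon
  rw [Set.not_nonempty_iff_eq_empty] at hcon
  obtain ⟨m, hm⟩ := exists_nat_ge ((j:ℝ)*a)
  have hsub : S ∩ Ioi (m:ℝ) ⊆
      Ioi ((j:ℝ)*a) \ ⋃ (q : ℚ) (_ : j ≤ q), (fun x => (q : ℝ) * x) '' A := by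
    rintro z ⟨hzS, hzm⟩
    rw [mem_Ioi] at hzm
    refine ⟨mem_Ioi.2 (lt_of_le_of_lt hm hzm), fun hzU => ?_⟩
    have : z ∈ S ∩ ⋃ (q : ℚ) (_ : j ≤ q), (fun x => (q : ℝ) * x) '' A := ⟨hzS, hzU⟩
    rw [hcon] at this
    exact this
  have h0 := (hSm m).trans_le (measure_mono hsub)
  rw [hkey] at h0
  exact lt_irrefl 0 h0
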